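/- Let |q| ≤ 1 and ρ > 0. In the Banach algebra A_q(ρ) of absolutely convergent series Σ a_{ik} x^i y^k with norm Σ |a_{ik}| ρ^{i+k}, every continuous character λ vanishes on the closed two-sided ideal I_xy = { Σ_{i,k ≥ 1} a_{ik} x^i y^k }, and the common kernel of all continuous characters equals I_xy. -/

import Mathlib

open Finset

instance : Finset.HasAntidiagonal (ℕ × ℕ) := Finset.HasAntidiagonal.antidiagonalOfLocallyFinite


lemma aux_ps_zero {ρ : ℝ} (hρ : 0 < ρ) (g : ℕ → ℂ)
    (hg : Summable fun i => ‖g i‖ * ρ ^ i)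
    (h : ∀ s : ℂ, ‖s‖ ≤ ρ → ∑' i, g i * s ^ i = 0) : ∀ i, g i = 0 := by
  set p := FormalMultilinearSeries.ofScalars ℂ g with hp
  have hpn : ∀ n, ‖p n‖ = ‖g n‖ := by
    intro n
    rw [hp, FormalMultilinearSeries.ofScalars]
    rw [norm_smul (g n) (ContinuousMultilinearMap.mkPiAlgebraFin ℂ n ℂ),
      ContinuousMultilinearMap.norm_mkPiAlgebraFin, mul_one]
  have hrad : (ρ.toNNReal : ENNReal) ≤ p.radius := by
    apply p.le_radius_of_summable_norm
    simp_rw [hpn]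
    convert hg using 2 with n
    rw [Real.coe_toNNReal _ hρ.le]
  have hrad0 : 0 < p.radius := lt_of_lt_of_le (by simpa using hρ) hrad
  have hball := (p.hasFPowerSeriesOnBall hrad0).hasFPowerSeriesAt
  have hzero : p.sum =ᶠ[nhds (0 : ℂ)] 0 := by
    have : Metric.ball (0 : ℂ) ρ ∈ nhds (0 : ℂ) := Metric.ball_mem_nhds _ hρ
    filter_upwards [this] with s hs
    have hs' : ‖s‖ ≤ ρ := by
      simpa [Complex.dist_eq] using (Metric.mem_ball.mp hs).le
    have : p.sum s = ∑' i, g i * s ^ i := by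
      rw [FormalMultilinearSeries.sum]
      congr 1; ext n
      rw [hp]
      simp [FormalMultilinearSeries.coeff, FormalMultilinearSeries.ofScalars]
    rw [this, h s hs']; rfl
  have := hball.eq_zero_of_eventually hzero
  intro i
  have := congrFun this i
  rw [hp] at this
  exact (FormalMultilinearSeries.ofScalars_eq_zero ℂ i).mp this



instance : Finset.HasAntidiagonal (ℕ × ℕ) := Finset.HasAntidiagonal.antidiagonalOfLocallyFinite

set_option maxHeartbeats 1000000 in
lemma exists_character {A : Type*} [NormedRing A] [NormedAlgebra ℂ A] [CompleteSpace A]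
    (q : ℂ) (hq : ‖q‖ ≤ 1) (ρ : ℝ) (hρ : 0 < ρ) (x y : A)
    (hnorm : ∀ a : ℕ × ℕ → ℂ, (Summable fun p : ℕ × ℕ => ‖a p‖ * ρ ^ (p.1 + p.2)) →
      ‖∑' p : ℕ × ℕ, a p • (x ^ p.1 * y ^ p.2)‖ = ∑' p : ℕ × ℕ, ‖a p‖ * ρ ^ (p.1 + p.2))
    (hsurj : ∀ z : A, ∃ a : ℕ × ℕ → ℂ,
      (Summable fun p : ℕ × ℕ => ‖a p‖ * ρ ^ (p.1 + p.2)) ∧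
      z = ∑' p : ℕ × ℕ, a p • (x ^ p.1 * y ^ p.2))
    (hMmul : ∀ p r : ℕ × ℕ, (x ^ p.1 * y ^ p.2) * (x ^ r.1 * y ^ r.2)
      = q ^ (p.2 * r.1) • (x ^ (p.1 + r.1) * y ^ (p.2 + r.2)))
    (φ : ℕ × ℕ → ℂ) (hφ1 : φ (0, 0) = 1)
    (hφm : ∀ p r : ℕ × ℕ, φ p * φ r = q ^ (p.2 * r.1) * φ (p + r))
    (hφb : ∀ p : ℕ × ℕ, ‖φ p‖ ≤ ρ ^ (p.1 + p.2)) :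
    ∃ χ : A →ₐ[ℂ] ℂ, Continuous χ ∧ ∀ a : ℕ × ℕ → ℂ,
      (Summable fun p : ℕ × ℕ => ‖a p‖ * ρ ^ (p.1 + p.2)) →
      χ (∑' p : ℕ × ℕ, a p • (x ^ p.1 * y ^ p.2)) = ∑' p : ℕ × ℕ, a p * φ p := by
  classical
  set M : ℕ × ℕ → A := fun p => x ^ p.1 * y ^ p.2 with hMdef
  have hnorm' : ∀ a : ℕ × ℕ → ℂ, (Summable fun p : ℕ × ℕ => ‖a p‖ * ρ ^ (p.1 + p.2)) →
      ‖∑' p : ℕ × ℕ, a p • M p‖ = ∑' p : ℕ × ℕ, ‖a p‖ * ρ ^ (p.1 + p.2) := hnorm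
  have hρp : ∀ p : ℕ × ℕ, (0:ℝ) < ρ ^ (p.1 + p.2) := fun p => pow_pos hρ _
  -- norm of monomials
  have hMnorm : ∀ p, ‖M p‖ = ρ ^ (p.1 + p.2) := by
    intro p
    have hs : Summable fun r : ℕ × ℕ =>
        ‖(if r = p then (1:ℂ) else 0)‖ * ρ ^ (r.1 + r.2) :=
      summable_of_ne_finset_zero (s := {p}) (by intro b hb; simp at hb; simp [hb])
    have h1 := hnorm' _ hs
    rw [tsum_eq_single p (by intro b hb; simp [hb]),
      tsum_eq_single p (by intro b hb; simp [hb])] at h1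
    simpa using h1
  have hsummand : ∀ (a : ℕ × ℕ → ℂ) (p : ℕ × ℕ), ‖a p • M p‖ = ‖a p‖ * ρ ^ (p.1 + p.2) := by
    intro a p; rw [norm_smul, hMnorm]
  have hsumA : ∀ a : ℕ × ℕ → ℂ, (Summable fun p => ‖a p‖ * ρ ^ (p.1 + p.2)) →
      Summable (fun p => a p • M p) := by
    intro a ha
    apply Summable.of_norm
    simpa only [hsummand] using ha
  -- uniqueness of coefficients
  have huniq : ∀ a b : ℕ × ℕ → ℂ, (Summable fun p => ‖a p‖ * ρ ^ (p.1 + p.2)) →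
      (Summable fun p => ‖b p‖ * ρ ^ (p.1 + p.2)) →
      (∑' p, a p • M p) = (∑' p, b p • M p) → a = b := by
    intro a b ha hb heq
    have hd : Summable fun p : ℕ × ℕ => ‖a p - b p‖ * ρ ^ (p.1 + p.2) := by
      apply Summable.of_nonneg_of_le
        (fun p => mul_nonneg (norm_nonneg _) (hρp p).le)
        (fun p => ?_) (ha.add hb)
      calc ‖a p - b p‖ * ρ ^ (p.1 + p.2)
          ≤ (‖a p‖ + ‖b p‖) * ρ ^ (p.1 + p.2) := by
            gcongr
            exact norm_sub_le _ _
        _ = ‖a p‖ * ρ ^ (p.1 + p.2) + ‖b p‖ * ρ ^ (p.1 + p.2) := by ring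
    have hzero : (∑' p, (a p - b p) • M p) = 0 := by
      have h1 : (∑' p, (a p - b p) • M p)
          = (∑' p, a p • M p) - ∑' p, b p • M p := by
        simp_rw [sub_smul]
        exact Summable.tsum_sub (hsumA a ha) (hsumA b hb)
      rw [h1, heq, sub_self]
    have h2 := hnorm' _ hd
    rw [hzero, norm_zero] at h2
    funext p
    have hle := Summable.le_tsum hd p (fun j _ => mul_nonneg (norm_nonneg _) (hρp j).le)
    rw [← h2] at hle
    have h3 : ‖a p - b p‖ * ρ ^ (p.1 + p.2) = 0 :=
      le_antisymm hle (mul_nonneg (norm_nonneg _) (hρp p).le)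
    have h4 := (mul_eq_zero.mp h3).resolve_right (hρp p).ne'
    rwa [norm_eq_zero, sub_eq_zero] at h4
  choose coeff hcS hcEq using hsurj
  have hcEq' : ∀ z : A, z = ∑' p, coeff z p • M p := hcEq
  set f : A → ℂ := fun z => ∑' p, coeff z p * φ p with hfdef
  have hsφ : ∀ a : ℕ × ℕ → ℂ, (Summable fun p => ‖a p‖ * ρ ^ (p.1 + p.2)) →
      Summable (fun p => a p * φ p) := by
    intro a ha
    apply Summable.of_norm_bounded ha
    intro p
    rw [norm_mul]
    calc ‖a p‖ * ‖φ p‖ ≤ ‖a p‖ * ρ ^ (p.1 + p.2) := by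
          gcongr
          exact hφb p
      _ = _ := rfl
  have hφnorm : ∀ a : ℕ × ℕ → ℂ, (Summable fun p => ‖a p‖ * ρ ^ (p.1 + p.2)) →
      Summable (fun p => ‖a p * φ p‖) := by
    intro a ha
    apply Summable.of_nonneg_of_le (fun p => norm_nonneg _) (fun p => ?_) ha
    rw [norm_mul]
    exact mul_le_mul_of_nonneg_left (hφb p) (norm_nonneg _)
  have hfeq : ∀ a : ℕ × ℕ → ℂ, (Summable fun p => ‖a p‖ * ρ ^ (p.1 + p.2)) →
      f (∑' p, a p • M p) = ∑' p, a p * φ p := by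
    intro a ha
    have : coeff (∑' p, a p • M p) = a :=
      huniq _ _ (hcS _) ha (hcEq' _).symm
    rw [hfdef]
    simp only
    rw [this]
  -- single coefficients
  have hsingle : ∀ r : ℂ, (r • (1:A)) = ∑' p : ℕ × ℕ,
      (if p = ((0,0) : ℕ × ℕ) then r else 0) • M p := by
    intro r
    rw [tsum_eq_single ((0,0) : ℕ × ℕ) (by intro b hb; rw [if_neg hb, zero_smul])]
    rw [if_pos rfl]
    show r • (1:A) = r • (x ^ 0 * y ^ 0)
    rw [pow_zero, pow_zero, one_mul]
  have hsingleS : ∀ r : ℂ, Summable fun p : ℕ × ℕ =>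
      ‖(if p = ((0,0) : ℕ × ℕ) then r else 0)‖ * ρ ^ (p.1 + p.2) :=
    fun r => summable_of_ne_finset_zero (s := {((0,0) : ℕ × ℕ)})
      (by intro b hb; simp at hb; simp [hb])
  have hfsmul1 : ∀ r : ℂ, f (r • (1:A)) = r := by
    intro r
    rw [hsingle r, hfeq _ (hsingleS r),
      tsum_eq_single ((0,0) : ℕ × ℕ) (by intro b hb; rw [if_neg hb, zero_mul])]
    rw [if_pos rfl, hφ1, mul_one]
  -- additivity
  have haddf : ∀ z w : A, f (z + w) = f z + f w := by
    intro z w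
    have hS : Summable fun p : ℕ × ℕ => ‖coeff z p + coeff w p‖ * ρ ^ (p.1 + p.2) := by
      apply Summable.of_nonneg_of_le
        (fun p => mul_nonneg (norm_nonneg _) (hρp p).le)
        (fun p => ?_) ((hcS z).add (hcS w))
      calc ‖coeff z p + coeff w p‖ * ρ ^ (p.1 + p.2)
          ≤ (‖coeff z p‖ + ‖coeff w p‖) * ρ ^ (p.1 + p.2) := by
            gcongr
            exact norm_add_le _ _
        _ = _ := by ring
    have h1 : coeff (z + w) = fun p => coeff z p + coeff w p := by
      apply huniq _ _ (hcS _) hS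
      rw [← hcEq' (z + w)]
      simp_rw [add_smul]
      rw [Summable.tsum_add (hsumA _ (hcS z)) (hsumA _ (hcS w)), ← hcEq' z, ← hcEq' w]
    rw [hfdef]
    simp only
    rw [h1]
    simp_rw [add_mul]
    exact Summable.tsum_add (hsφ _ (hcS z)) (hsφ _ (hcS w))
  -- multiplicativity
  have hmulf : ∀ z w : A, f (z * w) = f z * f w := by
    intro z w
    set a := coeff z with ha
    set b := coeff w with hb
    set c : ℕ × ℕ → ℂ :=
      fun t => ∑ u ∈ antidiagonal t, a u.1 * b u.2 * q ^ (u.1.2 * u.2.1) with hc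
    have hsa := hcS z
    have hsb := hcS w
    have habs : Summable fun u : (ℕ × ℕ) × (ℕ × ℕ) =>
        (‖a u.1‖ * ρ ^ (u.1.1 + u.1.2)) * (‖b u.2‖ * ρ ^ (u.2.1 + u.2.2)) :=
      Summable.mul_of_nonneg (f := fun p : ℕ × ℕ => ‖a p‖ * ρ ^ (p.1 + p.2))
        (g := fun p : ℕ × ℕ => ‖b p‖ * ρ ^ (p.1 + p.2)) hsa hsb
        (fun p => mul_nonneg (norm_nonneg _) (hρp p).le)
        (fun p => mul_nonneg (norm_nonneg _) (hρp p).le)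
    have hterm : ∀ t : ℕ × ℕ, ∀ u ∈ antidiagonal t,
        ρ ^ (t.1 + t.2) = ρ ^ (u.1.1 + u.1.2) * ρ ^ (u.2.1 + u.2.2) := by
      intro t u hu
      have h : u.1 + u.2 = t := mem_antidiagonal.mp hu
      rw [← pow_add]
      congr 1
      rw [← h]
      show u.1.1 + u.2.1 + (u.1.2 + u.2.2) = _
      ring
    have hSc : Summable fun t : ℕ × ℕ => ‖c t‖ * ρ ^ (t.1 + t.2) := by
      apply Summable.of_nonneg_of_le
        (fun t => mul_nonneg (norm_nonneg _) (hρp t).le)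
        (fun t => ?_)
        (summable_sum_mul_antidiagonal_of_summable_mul
          (f := fun p : ℕ × ℕ => ‖a p‖ * ρ ^ (p.1 + p.2))
          (g := fun p : ℕ × ℕ => ‖b p‖ * ρ ^ (p.1 + p.2)) habs)
      calc ‖c t‖ * ρ ^ (t.1 + t.2)
          ≤ (∑ u ∈ antidiagonal t, ‖a u.1‖ * ‖b u.2‖) * ρ ^ (t.1 + t.2) := by
            gcongr
            refine le_trans (norm_sum_le _ _) (Finset.sum_le_sum fun u _ => ?_)
            rw [norm_mul, norm_mul, norm_pow]
            calc ‖a u.1‖ * ‖b u.2‖ * ‖q‖ ^ (u.1.2 * u.2.1)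
                ≤ ‖a u.1‖ * ‖b u.2‖ * 1 := by
                  gcongr
                  exact pow_le_one₀ (norm_nonneg _) hq
              _ = ‖a u.1‖ * ‖b u.2‖ := mul_one _
        _ = ∑ u ∈ antidiagonal t, (‖a u.1‖ * ρ ^ (u.1.1 + u.1.2))
              * (‖b u.2‖ * ρ ^ (u.2.1 + u.2.2)) := by
            rw [Finset.sum_mul]
            refine Finset.sum_congr rfl fun u hu => ?_
            rw [hterm t u hu]
            ring
    have hprod : z * w = ∑' t, c t • M t := by
      conv_lhs => rw [hcEq' z, hcEq' w]
      rw [Summable.tsum_mul_tsum_eq_tsum_sum_antidiagonal (f := fun p : ℕ × ℕ => a p • M p)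
        (g := fun p : ℕ × ℕ => b p • M p) (hsumA a hsa) (hsumA b hsb)
        (summable_mul_of_summable_norm (f := fun p : ℕ × ℕ => a p • M p)
          (g := fun p : ℕ × ℕ => b p • M p)
          (by simpa only [hsummand] using hsa)
          (by simpa only [hsummand] using hsb))]
      refine tsum_congr fun t => ?_
      rw [hc]
      simp only
      rw [Finset.sum_smul]
      refine Finset.sum_congr rfl fun u hu => ?_
      have hut : u.1 + u.2 = t := mem_antidiagonal.mp hu
      rw [smul_mul_smul_comm, hMmul u.1 u.2, smul_smul]
      congr 1
      rw [← hut]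
      rfl
    have hcoeffzw : coeff (z * w) = c :=
      huniq _ _ (hcS _) hSc (by rw [← hcEq' (z * w), hprod])
    have hrhs : f z * f w = ∑' t : ℕ × ℕ, ∑ u ∈ antidiagonal t,
        (a u.1 * φ u.1) * (b u.2 * φ u.2) := by
      rw [hfdef]
      simp only
      rw [← ha, ← hb]
      exact Summable.tsum_mul_tsum_eq_tsum_sum_antidiagonal (f := fun p : ℕ × ℕ => a p * φ p)
        (g := fun p : ℕ × ℕ => b p * φ p) (hsφ a hsa) (hsφ b hsb)
        (summable_mul_of_summable_norm (f := fun p : ℕ × ℕ => a p * φ p)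
          (g := fun p : ℕ × ℕ => b p * φ p) (hφnorm a hsa) (hφnorm b hsb))
    rw [hrhs, hfdef]
    simp only
    rw [hcoeffzw]
    refine tsum_congr fun t => ?_
    rw [hc]
    simp only
    rw [Finset.sum_mul]
    refine Finset.sum_congr rfl fun u hu => ?_
    have hut : u.1 + u.2 = t := mem_antidiagonal.mp hu
    have := hφm u.1 u.2
    rw [hut] at this
    calc a u.1 * b u.2 * q ^ (u.1.2 * u.2.1) * φ t
        = a u.1 * b u.2 * (q ^ (u.1.2 * u.2.1) * φ t) := by ring
      _ = a u.1 * b u.2 * (φ u.1 * φ u.2) := by rw [← this]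
      _ = a u.1 * φ u.1 * (b u.2 * φ u.2) := by ring
  -- the character
  refine ⟨{ toFun := f,
            map_one' := by
              have := hfsmul1 1
              rwa [one_smul] at this,
            map_mul' := hmulf,
            map_zero' := by
              have := hfsmul1 0
              rwa [zero_smul] at this,
            map_add' := haddf,
            commutes' := by
              intro r
              show f (algebraMap ℂ A r) = r
              rw [Algebra.algebraMap_eq_smul_one]
              exact hfsmul1 r }, ?_, ?_⟩
  · -- continuity
    refine AddMonoidHomClass.continuous_of_bound _ 1 fun z => ?_
    rw [one_mul]
    show ‖f z‖ ≤ ‖z‖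
    have hnz : Summable fun p : ℕ × ℕ => ‖coeff z p * φ p‖ := hφnorm _ (hcS z)
    calc ‖f z‖ ≤ ∑' p, ‖coeff z p * φ p‖ := norm_tsum_le_tsum_norm hnz
      _ ≤ ∑' p, ‖coeff z p‖ * ρ ^ (p.1 + p.2) := by
          refine Summable.tsum_le_tsum (fun p => ?_) hnz (hcS z)
          rw [norm_mul]
          exact mul_le_mul_of_nonneg_left (hφb p) (norm_nonneg _)
      _ = ‖∑' p, coeff z p • M p‖ := (hnorm' _ (hcS z)).symm
      _ = ‖z‖ := by rw [← hcEq' z]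
  · exact hfeq


/-- The set of elements of the Banach quantum plane given by series
`Σ_{i,k ≥ 1} a_{ik} x^i y^k` (the closed two-sided ideal `I_xy`). -/
def IxySet {A : Type*} [NormedRing A] [NormedAlgebra ℂ A] (ρ : ℝ) (x y : A) : Set A :=
  {w : A | ∃ a : ℕ × ℕ → ℂ,
    (Summable fun p : ℕ × ℕ => ‖a p‖ * ρ ^ (p.1 + p.2)) ∧
    (∀ p : ℕ × ℕ, p.1 = 0 ∨ p.2 = 0 → a p = 0) ∧
    w = ∑' p : ℕ × ℕ, a p • (x ^ p.1 * y ^ p.2)}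

set_option maxHeartbeats 1000000 in
/-- In the Banach algebra `A_q(ρ)` (realized as a complex unital Banach algebra generated by
`x, y` with `y x = q x y`, `|q| ≤ 1`, `q ≠ 1`, in which every element is a series
`Σ a_{ik} x^i y^k` of norm `Σ |a_{ik}| ρ^{i+k}`), every continuous character vanishes on the
closed two-sided ideal `I_xy = {Σ_{i,k ≥ 1} a_{ik} x^i y^k}`, and the common kernel of all
continuous characters equals `I_xy`. -/
theorem Aqrho_characters_kernel {A : Type*} [NormedRing A] [NormedAlgebra ℂ A]
    [CompleteSpace A]
    (q : ℂ) (hq : ‖q‖ ≤ 1) (hq1 : q ≠ 1) (ρ : ℝ) (hρ : 0 < ρ)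
    (x y : A) (hxy : y * x = q • (x * y))
    (hnorm : ∀ a : ℕ × ℕ → ℂ, (Summable fun p : ℕ × ℕ => ‖a p‖ * ρ ^ (p.1 + p.2)) →
      ‖∑' p : ℕ × ℕ, a p • (x ^ p.1 * y ^ p.2)‖ = ∑' p : ℕ × ℕ, ‖a p‖ * ρ ^ (p.1 + p.2))
    (hsurj : ∀ z : A, ∃ a : ℕ × ℕ → ℂ,
      (Summable fun p : ℕ × ℕ => ‖a p‖ * ρ ^ (p.1 + p.2)) ∧
      z = ∑' p : ℕ × ℕ, a p • (x ^ p.1 * y ^ p.2)) :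
    (∀ χ : A →ₐ[ℂ] ℂ, Continuous χ → ∀ z ∈ IxySet ρ x y, χ z = 0) ∧
    {w : A | ∀ χ : A →ₐ[ℂ] ℂ, Continuous χ → χ w = 0} = IxySet ρ x y := by
  classical
  have hρp : ∀ p : ℕ × ℕ, (0:ℝ) < ρ ^ (p.1 + p.2) := fun p => pow_pos hρ _
  -- commutation rules
  have hyx1 : ∀ k : ℕ, y ^ k * x = q ^ k • (x * y ^ k) := by
    intro k
    induction k with
    | zero => simp
    | succ k ih =>
      rw [pow_succ, mul_assoc, hxy, mul_smul_comm, ← mul_assoc, ih, smul_mul_assoc,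
        smul_smul, pow_succ q, mul_comm (q ^ k) q, mul_assoc]
  have hyxn : ∀ k j : ℕ, y ^ k * x ^ j = q ^ (k * j) • (x ^ j * y ^ k) := by
    intro k j
    induction j with
    | zero => simp
    | succ j ih =>
      rw [pow_succ x, ← mul_assoc, ih, smul_mul_assoc, mul_assoc, hyx1, mul_smul_comm,
        smul_smul, ← pow_add, ← mul_assoc, ← pow_succ, ← Nat.mul_succ]
  have hMmul : ∀ p r : ℕ × ℕ, (x ^ p.1 * y ^ p.2) * (x ^ r.1 * y ^ r.2)
      = q ^ (p.2 * r.1) • (x ^ (p.1 + r.1) * y ^ (p.2 + r.2)) := by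
    intro p r
    rw [mul_assoc, ← mul_assoc (y ^ p.2), hyxn, smul_mul_assoc, mul_smul_comm]
    congr 1
    rw [pow_add, pow_add]
    simp only [mul_assoc]
  -- norms of monomials, summability in A
  have hMnorm : ∀ p : ℕ × ℕ, ‖x ^ p.1 * y ^ p.2‖ = ρ ^ (p.1 + p.2) := by
    intro p
    have hs : Summable fun r : ℕ × ℕ =>
        ‖(if r = p then (1:ℂ) else 0)‖ * ρ ^ (r.1 + r.2) :=
      summable_of_ne_finset_zero (s := {p}) (by intro b hb; simp at hb; simp [hb])
    have h1 := hnorm _ hs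
    rw [tsum_eq_single p (by intro b hb; simp [hb]),
      tsum_eq_single p (by intro b hb; simp [hb])] at h1
    simpa using h1
  have hsumA : ∀ a : ℕ × ℕ → ℂ, (Summable fun p : ℕ × ℕ => ‖a p‖ * ρ ^ (p.1 + p.2)) →
      Summable (fun p : ℕ × ℕ => a p • (x ^ p.1 * y ^ p.2)) := by
    intro a ha
    apply Summable.of_norm
    have : ∀ p : ℕ × ℕ, ‖a p • (x ^ p.1 * y ^ p.2)‖ = ‖a p‖ * ρ ^ (p.1 + p.2) := by
      intro p; rw [norm_smul, hMnorm]
    simpa only [this] using ha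
  -- Part 1
  have part1 : ∀ χ : A →ₐ[ℂ] ℂ, Continuous χ → ∀ z ∈ IxySet ρ x y, χ z = 0 := by
    intro χ hχ z hz
    obtain ⟨a, haS, hvan, rfl⟩ := hz
    have hxyzero : χ x * χ y = 0 := by
      have h1 : χ y * χ x = χ (y * x) := (map_mul χ y x).symm
      rw [hxy, map_smul, map_mul, smul_eq_mul] at h1
      have h4 : (1 - q) * (χ x * χ y) = 0 := by linear_combination h1
      have h5 : 1 - q ≠ 0 := sub_ne_zero.mpr (Ne.symm hq1)
      exact (mul_eq_zero.mp h4).resolve_left h5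
    have hmap : χ (∑' p : ℕ × ℕ, a p • (x ^ p.1 * y ^ p.2))
        = ∑' p : ℕ × ℕ, χ (a p • (x ^ p.1 * y ^ p.2)) :=
      ContinuousLinearMap.map_tsum ⟨χ.toLinearMap, hχ⟩ (hsumA a haS)
    rw [hmap]
    have hterm : ∀ p : ℕ × ℕ, χ (a p • (x ^ p.1 * y ^ p.2)) = 0 := by
      intro p
      rcases Nat.eq_zero_or_pos p.1 with h1 | h1
      · rw [hvan p (Or.inl h1), zero_smul, map_zero]
      rcases Nat.eq_zero_or_pos p.2 with h2 | h2
      · rw [hvan p (Or.inr h2), zero_smul, map_zero]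
      obtain ⟨m, hm⟩ := Nat.exists_eq_succ_of_ne_zero h1.ne'
      obtain ⟨n, hn⟩ := Nat.exists_eq_succ_of_ne_zero h2.ne'
      rw [map_smul, map_mul, map_pow, map_pow, hm, hn, pow_succ, pow_succ]
      have h3 : χ x ^ m * χ x * (χ y ^ n * χ y) = (χ x ^ m * χ y ^ n) * (χ x * χ y) := by
        ring
      rw [h3, hxyzero, mul_zero, smul_zero]
    rw [tsum_congr hterm, tsum_zero]
  refine ⟨part1, ?_⟩
  ext w
  simp only [Set.mem_setOf_eq]
  constructor
  · intro hw
    obtain ⟨a, haS, hwa⟩ := hsurj w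
    -- vanishing of the x-axis coefficients
    have hxcoeff : ∀ i : ℕ, a (i, 0) = 0 := by
      have hinj : Function.Injective (fun i : ℕ => ((i, 0) : ℕ × ℕ)) := by
        intro i j h
        simpa using h
      have key : ∀ s : ℂ, ‖s‖ ≤ ρ → ∑' i : ℕ, a (i, 0) * s ^ i = 0 := by
        intro s hs
        set φ : ℕ × ℕ → ℂ := fun p => if p.2 = 0 then s ^ p.1 else 0 with hφ
        have hφ1 : φ (0, 0) = 1 := by simp [hφ]
        have hφm : ∀ p r : ℕ × ℕ, φ p * φ r = q ^ (p.2 * r.1) * φ (p + r) := by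
          intro p r
          rw [hφ]
          simp only
          by_cases h2 : p.2 = 0
          · by_cases h4 : r.2 = 0
            · have h6 : (p + r).2 = 0 := by
                show p.2 + r.2 = 0
                rw [h2, h4]
              rw [if_pos h2, if_pos h4, if_pos h6, h2]
              simp only [Nat.zero_mul, pow_zero, one_mul, ← pow_add]
              rfl
            · have h6 : (p + r).2 ≠ 0 := by
                show p.2 + r.2 ≠ 0
                omega
              rw [if_pos h2, if_neg h4, if_neg h6, mul_zero, mul_zero]
          · have h6 : (p + r).2 ≠ 0 := by
              show p.2 + r.2 ≠ 0
              omega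
            rw [if_neg h2, if_neg h6, zero_mul, mul_zero]
        have hφb : ∀ p : ℕ × ℕ, ‖φ p‖ ≤ ρ ^ (p.1 + p.2) := by
          intro p
          rw [hφ]
          simp only
          by_cases h2 : p.2 = 0
          · rw [if_pos h2, h2, norm_pow, Nat.add_zero]
            exact pow_le_pow_left₀ (norm_nonneg s) hs p.1
          · rw [if_neg h2, norm_zero]
            exact (hρp p).le
        obtain ⟨χ, hχc, hχval⟩ :=
          exists_character q hq ρ hρ x y hnorm hsurj hMmul φ hφ1 hφm hφb
        have h0 : χ w = 0 := hw χ hχc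
        rw [hwa, hχval a haS] at h0
        rw [← h0]
        have hsupp : Function.support (fun p : ℕ × ℕ => a p * φ p)
            ⊆ Set.range (fun i : ℕ => ((i, 0) : ℕ × ℕ)) := by
          intro p hp
          rcases Nat.eq_zero_or_pos p.2 with h2 | h2
          · exact ⟨p.1, by rw [← h2]⟩
          · exfalso
            apply hp
            rw [hφ]
            simp only
            rw [if_neg h2.ne', mul_zero]
        rw [← Function.Injective.tsum_eq hinj hsupp]
        refine tsum_congr fun i => ?_
        rw [hφ]
        simp
      have hgs : Summable fun i : ℕ => ‖a (i, 0)‖ * ρ ^ i :=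
        (haS.comp_injective hinj).congr (fun i => by simp [Function.comp])
      exact aux_ps_zero hρ _ hgs key
    -- vanishing of the y-axis coefficients
    have hycoeff : ∀ k : ℕ, a (0, k) = 0 := by
      have hinj : Function.Injective (fun k : ℕ => ((0, k) : ℕ × ℕ)) := by
        intro i j h
        simpa using h
      have key : ∀ s : ℂ, ‖s‖ ≤ ρ → ∑' k : ℕ, a (0, k) * s ^ k = 0 := by
        intro s hs
        set φ : ℕ × ℕ → ℂ := fun p => if p.1 = 0 then s ^ p.2 else 0 with hφ
        have hφ1 : φ (0, 0) = 1 := by simp [hφ]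
        have hφm : ∀ p r : ℕ × ℕ, φ p * φ r = q ^ (p.2 * r.1) * φ (p + r) := by
          intro p r
          rw [hφ]
          simp only
          by_cases h2 : p.1 = 0
          · by_cases h4 : r.1 = 0
            · have h6 : (p + r).1 = 0 := by
                show p.1 + r.1 = 0
                rw [h2, h4]
              rw [if_pos h2, if_pos h4, if_pos h6, h4]
              simp only [Nat.mul_zero, pow_zero, one_mul, ← pow_add]
              rfl
            · have h6 : (p + r).1 ≠ 0 := by
                show p.1 + r.1 ≠ 0
                omega
              rw [if_pos h2, if_neg h4, if_neg h6, mul_zero, mul_zero]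
          · have h6 : (p + r).1 ≠ 0 := by
              show p.1 + r.1 ≠ 0
              omega
            rw [if_neg h2, if_neg h6, zero_mul, mul_zero]
        have hφb : ∀ p : ℕ × ℕ, ‖φ p‖ ≤ ρ ^ (p.1 + p.2) := by
          intro p
          rw [hφ]
          simp only
          by_cases h2 : p.1 = 0
          · rw [if_pos h2, h2, norm_pow, Nat.zero_add]
            exact pow_le_pow_left₀ (norm_nonneg s) hs p.2
          · rw [if_neg h2, norm_zero]
            exact (hρp p).le
        obtain ⟨χ, hχc, hχval⟩ :=
          exists_character q hq ρ hρ x y hnorm hsurj hMmul φ hφ1 hφm hφb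
        have h0 : χ w = 0 := hw χ hχc
        rw [hwa, hχval a haS] at h0
        rw [← h0]
        have hsupp : Function.support (fun p : ℕ × ℕ => a p * φ p)
            ⊆ Set.range (fun k : ℕ => ((0, k) : ℕ × ℕ)) := by
          intro p hp
          rcases Nat.eq_zero_or_pos p.1 with h2 | h2
          · exact ⟨p.2, by rw [← h2]⟩
          · exfalso
            apply hp
            rw [hφ]
            simp only
            rw [if_neg h2.ne', mul_zero]
        rw [← Function.Injective.tsum_eq hinj hsupp]
        refine tsum_congr fun k => ?_
        rw [hφ]
        simp
      have hgs : Summable fun k : ℕ => ‖a (0, k)‖ * ρ ^ k :=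
        (haS.comp_injective hinj).congr (fun k => by simp [Function.comp])
      exact aux_ps_zero hρ _ hgs key
    refine ⟨a, haS, ?_, hwa⟩
    rintro ⟨i, k⟩ (h | h)
    · dsimp at h
      subst h
      exact hycoeff k
    · dsimp at h
      subst h
      exact hxcoeff i
  · intro hmem χ hχ
    exact part1 χ hχ w hmem
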